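/- Let s₁, s₂ : [0,T] → ℝ be differentiable functions solving the slow-down system, i.e. s₁'(t) = L·s₁(t)·(s₁(t)² + s₂(t)²)^α and s₂'(t) = −L·s₂(t)·(s₁(t)² + s₂(t)²)^α for all t ∈ [0,T], with s₁(t) > 0 and s₂(t) > 0 for all t ∈ [0,T]. Then for all 0 ≤ t ≤ b ≤ T one has s₁(t) ≤ s₁(b)·(1 + C₀·s₁(b)^{2α}·(b−t))^{−1/(2α)}. -/

import Mathlib

/-- Lemma "s1 and s2 approx" (d): upper bound on `s₁` along a solution of the
slow-down system `s₁' = L s₁ (s₁² + s₂²)^α`, `s₂' = -L s₂ (s₁² + s₂²)^α`,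
where `L = (log λ) (p/2)^{2α}` and `C₀ = 2 α L`. -/
theorem slowdown_s1_upper_bound
    (lam α : ℝ) (hlam : 1 < lam) (hα : α ∈ Set.Ioo (0 : ℝ) 1)
    (p : ℤ) (hp : 3 ≤ p)
    (L C₀ : ℝ)
    (hL : L = Real.log lam * ((p : ℝ) / 2) ^ (2 * α))
    (hC₀ : C₀ = 2 * α * L)
    (T : ℝ) (s₁ s₂ : ℝ → ℝ)
    (hs₁ : ∀ t ∈ Set.Icc (0 : ℝ) T,
      HasDerivAt s₁ (L * s₁ t * (s₁ t ^ 2 + s₂ t ^ 2) ^ α) t)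
    (hs₂ : ∀ t ∈ Set.Icc (0 : ℝ) T,
      HasDerivAt s₂ (-(L * s₂ t * (s₁ t ^ 2 + s₂ t ^ 2) ^ α)) t)
    (hpos₁ : ∀ t ∈ Set.Icc (0 : ℝ) T, 0 < s₁ t)
    (hpos₂ : ∀ t ∈ Set.Icc (0 : ℝ) T, 0 < s₂ t)
    (t b : ℝ) (ht : 0 ≤ t) (htb : t ≤ b) (hbT : b ≤ T) :
    s₁ t ≤ s₁ b * (1 + C₀ * s₁ b ^ (2 * α) * (b - t)) ^ (-(1 / (2 * α))) := by
  obtain ⟨hα0, hα1⟩ := hα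
  have hL0 : 0 < L := by
    rw [hL]
    have h1 : 0 < Real.log lam := Real.log_pos hlam
    have h2 : (0:ℝ) < (p : ℝ) / 2 := by
      have : (3:ℝ) ≤ (p:ℝ) := by exact_mod_cast hp
      linarith
    positivity
  have hC0 : 0 < C₀ := by rw [hC₀]; positivity
  have h2α : 0 < 2 * α := by linarith
  have htT : t ∈ Set.Icc (0:ℝ) T := ⟨ht, le_trans htb hbT⟩
  have hbI : b ∈ Set.Icc (0:ℝ) T := ⟨le_trans ht htb, hbT⟩
  set g : ℝ → ℝ := fun u => s₁ u ^ (-(2*α)) + C₀ * u with hg_def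
  -- derivative of g
  have hg : ∀ u ∈ Set.Icc (0:ℝ) T, HasDerivAt g
      ((-(2*α)) * s₁ u ^ (-(2*α) - 1) * (L * s₁ u * (s₁ u ^ 2 + s₂ u ^ 2) ^ α) + C₀) u := by
    intro u hu
    have h1 := (hs₁ u hu).rpow_const (p := -(2*α)) (Or.inl (ne_of_gt (hpos₁ u hu)))
    have h2 : HasDerivAt (fun v : ℝ => C₀ * v) C₀ u := by
      simpa using (hasDerivAt_id u).const_mul C₀
    exact (h1.add h2).congr_deriv (by ring)
  have hgderiv_nonpos : ∀ u ∈ Set.Icc (0:ℝ) T,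
      (-(2*α)) * s₁ u ^ (-(2*α) - 1) * (L * s₁ u * (s₁ u ^ 2 + s₂ u ^ 2) ^ α) + C₀ ≤ 0 := by
    intro u hu
    have hs1pos := hpos₁ u hu
    have hs2pos := hpos₂ u hu
    have hSpos : (0:ℝ) < s₁ u ^ 2 + s₂ u ^ 2 := by positivity
    have hmul : s₁ u ^ (-(2*α) - 1) * s₁ u = s₁ u ^ (-(2*α)) := by
      have : s₁ u ^ (-(2*α) - 1) * s₁ u ^ (1:ℝ) = s₁ u ^ (-(2*α) - 1 + 1) :=
        (Real.rpow_add hs1pos _ _).symm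
      simpa using this
    have hineq : s₁ u ^ (2*α) ≤ (s₁ u ^ 2 + s₂ u ^ 2) ^ α := by
      have h1 : s₁ u ^ (2*α) = (s₁ u ^ 2) ^ α := by
        rw [← Real.rpow_natCast (s₁ u) 2, ← Real.rpow_mul hs1pos.le]
        norm_num
      rw [h1]
      exact Real.rpow_le_rpow (by positivity) (by nlinarith [sq_nonneg (s₂ u)]) hα0.le
    have hone : (1:ℝ) ≤ s₁ u ^ (-(2*α)) * (s₁ u ^ 2 + s₂ u ^ 2) ^ α := by
      have hpow : s₁ u ^ (-(2*α)) * s₁ u ^ (2*α) = 1 := by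
        rw [← Real.rpow_add hs1pos]; simp
      calc (1:ℝ) = s₁ u ^ (-(2*α)) * s₁ u ^ (2*α) := hpow.symm
        _ ≤ s₁ u ^ (-(2*α)) * (s₁ u ^ 2 + s₂ u ^ 2) ^ α :=
          mul_le_mul_of_nonneg_left hineq (Real.rpow_nonneg hs1pos.le _)
    have key : C₀ ≤ (2*α) * s₁ u ^ (-(2*α) - 1) * (L * s₁ u * (s₁ u ^ 2 + s₂ u ^ 2) ^ α) := by
      have heq : (2*α) * s₁ u ^ (-(2*α) - 1) * (L * s₁ u * (s₁ u ^ 2 + s₂ u ^ 2) ^ α)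
          = (2*α*L) * (s₁ u ^ (-(2*α)) * (s₁ u ^ 2 + s₂ u ^ 2) ^ α) := by
        rw [← hmul]; ring
      rw [heq, hC₀]
      nlinarith [hone, mul_pos h2α hL0]
    nlinarith [key]
  have hAnti : AntitoneOn g (Set.Icc (0:ℝ) T) := by
    apply antitoneOn_of_deriv_nonpos (convex_Icc 0 T)
    · intro u hu; exact (hg u hu).continuousAt.continuousWithinAt
    · intro u hu
      exact (hg u (interior_subset hu)).differentiableAt.differentiableWithinAt
    · intro u hu
      rw [(hg u (interior_subset hu)).deriv]
      exact hgderiv_nonpos u (interior_subset hu)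
  have hgb : g b ≤ g t := hAnti htT hbI htb
  have hkey : s₁ b ^ (-(2*α)) + C₀ * (b - t) ≤ s₁ t ^ (-(2*α)) := by
    simp only [hg_def] at hgb; linarith
  -- now the algebra
  have hs1t := hpos₁ t htT
  have hs1b := hpos₁ b hbI
  set X : ℝ := 1 + C₀ * s₁ b ^ (2 * α) * (b - t) with hX
  have hXpos : 0 < X := by
    have hbt : (0:ℝ) ≤ b - t := by linarith
    have : 0 ≤ C₀ * s₁ b ^ (2*α) * (b - t) :=
      mul_nonneg (mul_nonneg hC0.le (Real.rpow_nonneg hs1b.le _)) hbt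
    linarith
  have hBX : s₁ b ^ (-(2*α)) * X = s₁ b ^ (-(2*α)) + C₀ * (b - t) := by
    have hpow : s₁ b ^ (-(2*α)) * s₁ b ^ (2*α) = 1 := by
      rw [← Real.rpow_add hs1b]; simp
    have hexp : s₁ b ^ (-(2*α)) * X
        = s₁ b ^ (-(2*α)) + (s₁ b ^ (-(2*α)) * s₁ b ^ (2*α)) * (C₀ * (b - t)) := by
      rw [hX]; ring
    rw [hexp, hpow, one_mul]
  have hmain : s₁ b ^ (-(2*α)) * X ≤ s₁ t ^ (-(2*α)) := by
    rw [hBX]; exact hkey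
  have hBXpos : 0 < s₁ b ^ (-(2*α)) * X :=
    mul_pos (Real.rpow_pos_of_pos hs1b _) hXpos
  have hz : -(1/(2*α)) ≤ 0 := by
    have : 0 < 1/(2*α) := by positivity
    linarith
  have hfinal := Real.rpow_le_rpow_of_nonpos hBXpos hmain hz
  have hleft : (s₁ t ^ (-(2*α))) ^ (-(1/(2*α))) = s₁ t := by
    rw [← Real.rpow_mul hs1t.le]
    have : -(2*α) * -(1/(2*α)) = 1 := by field_simp
    rw [this, Real.rpow_one]
  have hright : (s₁ b ^ (-(2*α)) * X) ^ (-(1/(2*α))) = s₁ b * X ^ (-(1/(2*α))) := by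
    rw [Real.mul_rpow (Real.rpow_nonneg hs1b.le _) hXpos.le,
      ← Real.rpow_mul hs1b.le]
    have : -(2*α) * -(1/(2*α)) = 1 := by field_simp
    rw [this, Real.rpow_one]
  rw [hleft, hright] at hfinal
  exact hfinal
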